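/- Let DB and DB' be databases mapping a finite set of record identifiers I to values in [N]^k, let QD be a probability distribution over all range queries, and define the response distribution RD (resp. RD') assigning to each subset rsp ⊆ I the probability that a query drawn from QD returns exactly the records of DB (resp. DB') whose values it covers. Suppose that for every subset S ⊆ I with |S| ≤ 2k, the probability that a random query covers all values DB(id), id ∈ S, equals the probability that it covers all values DB'(id), id ∈ S. Then RD = RD', i.e., every response rsp ⊆ I has the same probability under both databases. -/
import Mathlib


open scoped Classical

abbrev Pt (N k : ℕ) := Fin k → Fin N

def covers {N k : ℕ} (a b v : Pt N k) : Prop := ∀ i, a i ≤ v i ∧ v i ≤ b i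

/-- The response of the query `q` on database `DB`: the identifiers whose values it covers. -/
noncomputable def response {N k : ℕ} {I : Type*} [Fintype I]
    (DB : I → Pt N k) (q : Pt N k × Pt N k) : Finset I :=
  Finset.univ.filter (fun id => covers q.1 q.2 (DB id))

/-- Probability (under `QD`) that the response on `DB` is exactly `rsp`. -/
noncomputable def respPr {N k : ℕ} {I : Type*} [Fintype I]
    (QD : Pt N k × Pt N k → ℝ) (DB : I → Pt N k) (rsp : Finset I) : ℝ :=
  ∑ q : Pt N k × Pt N k, if q.1 ≤ q.2 ∧ response DB q = rsp then QD q else 0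

/-- Probability (under `QD`) that a query covers all values of the records in `S`. -/
noncomputable def covAllPr {N k : ℕ} {I : Type*} [Fintype I]
    (QD : Pt N k × Pt N k → ℝ) (DB : I → Pt N k) (S : Finset I) : ℝ :=
  ∑ q : Pt N k × Pt N k, if q.1 ≤ q.2 ∧ ∀ id ∈ S, covers q.1 q.2 (DB id) then QD q else 0

/-- Every finite set of records has an "extreme" subset of size at most `2k` such that any
box covering the extreme subset covers the whole set. -/
lemma ext_exists {N k : ℕ} {I : Type*} [Fintype I] [DecidableEq I]
    (DB : I → Pt N k) (S : Finset I) :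
    ∃ E ⊆ S, E.card ≤ 2 * k ∧
      ∀ a b : Pt N k, (∀ id ∈ E, covers a b (DB id)) → ∀ id ∈ S, covers a b (DB id) := by
  rcases S.eq_empty_or_nonempty with rfl | hS
  · exact ⟨∅, Finset.Subset.refl _, by simp, by simp⟩
  · have hmin : ∀ i : Fin k, ∃ m ∈ S, ∀ id ∈ S, DB m i ≤ DB id i :=
      fun i => S.exists_min_image (fun id => DB id i) hS
    have hmax : ∀ i : Fin k, ∃ m ∈ S, ∀ id ∈ S, DB id i ≤ DB m i :=
      fun i => S.exists_max_image (fun id => DB id i) hS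
    choose mn hmnS hmn using hmin
    choose mx hmxS hmx using hmax
    refine ⟨(Finset.univ.image mn) ∪ (Finset.univ.image mx), ?_, ?_, ?_⟩
    · intro x hx
      rcases Finset.mem_union.1 hx with h | h <;>
        · rcases Finset.mem_image.1 h with ⟨i, _, rfl⟩
          first | exact hmnS i | exact hmxS i
    · calc ((Finset.univ.image mn) ∪ (Finset.univ.image mx)).card
          ≤ (Finset.univ.image mn).card + (Finset.univ.image mx).card :=
            Finset.card_union_le _ _
        _ ≤ k + k := by
            have h1 := Finset.card_image_le (s := (Finset.univ : Finset (Fin k))) (f := mn)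
            have h2 := Finset.card_image_le (s := (Finset.univ : Finset (Fin k))) (f := mx)
            simp only [Finset.card_univ, Fintype.card_fin] at h1 h2
            omega
        _ = 2 * k := by ring
    · intro a b h id hid i
      have hmnE : mn i ∈ (Finset.univ.image mn) ∪ (Finset.univ.image mx) :=
        Finset.mem_union_left _ (Finset.mem_image_of_mem _ (Finset.mem_univ i))
      have hmxE : mx i ∈ (Finset.univ.image mn) ∪ (Finset.univ.image mx) :=
        Finset.mem_union_right _ (Finset.mem_image_of_mem _ (Finset.mem_univ i))
      exact ⟨le_trans ((h _ hmnE) i).1 (hmn i id hid),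
        le_trans (hmx i id hid) ((h _ hmxE) i).2⟩

/-- Monotonicity: covering all of a larger set is (pointwise) harder. -/
lemma covAllPr_mono {N k : ℕ} {I : Type*} [Fintype I]
    (QD : Pt N k × Pt N k → ℝ) (hnn : ∀ q, 0 ≤ QD q) (DB : I → Pt N k)
    {E S : Finset I} (hES : E ⊆ S) :
    covAllPr QD DB S ≤ covAllPr QD DB E := by
  unfold covAllPr
  refine Finset.sum_le_sum fun q _ => ?_
  by_cases h : q.1 ≤ q.2 ∧ ∀ id ∈ S, covers q.1 q.2 (DB id)
  · rw [if_pos h, if_pos ⟨h.1, fun id hid => h.2 id (hES hid)⟩]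
  · rw [if_neg h]
    split
    · exact hnn q
    · exact le_refl 0

lemma covAllPr_ext {N k : ℕ} {I : Type*} [Fintype I]
    (QD : Pt N k × Pt N k → ℝ) (DB : I → Pt N k)
    {E S : Finset I} (hES : E ⊆ S)
    (hext : ∀ a b : Pt N k, (∀ id ∈ E, covers a b (DB id)) → ∀ id ∈ S, covers a b (DB id)) :
    covAllPr QD DB S = covAllPr QD DB E := by
  unfold covAllPr
  refine Finset.sum_congr rfl fun q _ => ?_
  congr 1
  simp only [eq_iff_iff]
  constructor
  · rintro ⟨h1, h2⟩; exact ⟨h1, fun id hid => h2 id (hES hid)⟩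
  · rintro ⟨h1, h2⟩; exact ⟨h1, hext q.1 q.2 h2⟩

section

variable {N k : ℕ} {I : Type*} [Fintype I] [DecidableEq I]

/-- `covAllPr` agrees on *all* subsets, not just small ones. -/
lemma covAll_all (DB DB' : I → Pt N k) (QD : Pt N k × Pt N k → ℝ)
    (hnn : ∀ q : Pt N k × Pt N k, 0 ≤ QD q)
    (hpass : ∀ S : Finset I, S.card ≤ 2 * k → covAllPr QD DB S = covAllPr QD DB' S)
    (S : Finset I) : covAllPr QD DB S = covAllPr QD DB' S := by
  obtain ⟨E, hES, hEcard, hext⟩ := ext_exists DB S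
  obtain ⟨E', hES', hEcard', hext'⟩ := ext_exists DB' S
  have h1 : covAllPr QD DB S = covAllPr QD DB E := covAllPr_ext QD DB hES hext
  have h1' : covAllPr QD DB' S = covAllPr QD DB' E' := covAllPr_ext QD DB' hES' hext'
  have le1 : covAllPr QD DB' S ≤ covAllPr QD DB S := by
    calc covAllPr QD DB' S ≤ covAllPr QD DB' E := covAllPr_mono QD hnn DB' hES
      _ = covAllPr QD DB E := (hpass E hEcard).symm
      _ = covAllPr QD DB S := h1.symm
  have le2 : covAllPr QD DB S ≤ covAllPr QD DB' S := by
    calc covAllPr QD DB S ≤ covAllPr QD DB E' := covAllPr_mono QD hnn DB hES'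
      _ = covAllPr QD DB' E' := hpass E' hEcard'
      _ = covAllPr QD DB' S := h1'.symm
  linarith

lemma sum_pow_real {α : Type*} [DecidableEq α] (x : Finset α) :
    (∑ m ∈ x.powerset, (-1 : ℝ) ^ m.card) = if x = ∅ then 1 else 0 := by
  have h := Finset.sum_powerset_neg_one_pow_card (x := x)
  have : ((∑ m ∈ x.powerset, (-1 : ℤ) ^ m.card : ℤ) : ℝ)
      = ∑ m ∈ x.powerset, (-1 : ℝ) ^ m.card := by push_cast; rfl
  rw [← this, h]
  split <;> simp

lemma mem_response_iff (DB : I → Pt N k) (q : Pt N k × Pt N k) (id : I) :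
    id ∈ response DB q ↔ covers q.1 q.2 (DB id) := by
  simp [response]

set_option maxHeartbeats 1000000 in
/-- Inclusion–exclusion: the response probability is an alternating sum of coverage
probabilities. -/
lemma respPr_ie (QD : Pt N k × Pt N k → ℝ) (DB : I → Pt N k) (rsp : Finset I) :
    respPr QD DB rsp =
      ∑ T ∈ rspᶜ.powerset, (-1 : ℝ) ^ T.card * covAllPr QD DB (rsp ∪ T) := by
  unfold respPr covAllPr
  simp_rw [Finset.mul_sum]
  rw [Finset.sum_comm]
  refine Finset.sum_congr rfl fun q _ => ?_
  by_cases hq : q.1 ≤ q.2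
  case neg =>
    rw [if_neg (fun h => hq h.1)]
    refine (Finset.sum_eq_zero fun T _ => ?_).symm
    rw [if_neg (fun h => hq h.1), mul_zero]
  case pos =>
    have hcov2 : ∀ T : Finset I,
        (q.1 ≤ q.2 ∧ ∀ id ∈ rsp ∪ T, covers q.1 q.2 (DB id))
          = (rsp ⊆ response DB q ∧ T ⊆ response DB q) := by
      intro T
      apply propext
      rw [← Finset.union_subset_iff]
      constructor
      · rintro ⟨_, h2⟩ id hid
        exact (mem_response_iff DB q id).2 (h2 id hid)
      · intro h
        exact ⟨hq, fun id hid => (mem_response_iff DB q id).1 (h hid)⟩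
    simp only [hcov2]
    by_cases h1 : rsp ⊆ response DB q
    · simp only [h1, true_and]
      have e1 : (∑ T ∈ rspᶜ.powerset,
            (-1:ℝ)^T.card * (if T ⊆ response DB q then QD q else 0))
          = ∑ T ∈ (rspᶜ ∩ response DB q).powerset,
            (-1:ℝ)^T.card * (if T ⊆ response DB q then QD q else 0) := by
        refine (Finset.sum_subset
          (Finset.powerset_mono.2 Finset.inter_subset_left) ?_).symm
        intro T hT hTn
        rw [Finset.mem_powerset] at hT hTn
        rw [if_neg, mul_zero]
        intro hTR
        exact hTn (Finset.subset_inter hT hTR)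
      have e2 : (∑ T ∈ (rspᶜ ∩ response DB q).powerset,
            (-1:ℝ)^T.card * (if T ⊆ response DB q then QD q else 0))
          = ∑ T ∈ (rspᶜ ∩ response DB q).powerset, (-1:ℝ)^T.card * QD q := by
        refine Finset.sum_congr rfl fun T hT => ?_
        rw [Finset.mem_powerset] at hT
        rw [if_pos (hT.trans Finset.inter_subset_right)]
      have e3 : (∑ T ∈ (rspᶜ ∩ response DB q).powerset, (-1:ℝ)^T.card * QD q)
          = (if rspᶜ ∩ response DB q = ∅ then 1 else 0) * QD q := by
        rw [← Finset.sum_mul, sum_pow_real]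
      have e4 : (if rspᶜ ∩ response DB q = ∅ then (1:ℝ) else 0) * QD q
          = (if q.1 ≤ q.2 ∧ response DB q = rsp then QD q else 0) := by
        have hPe : (rspᶜ ∩ response DB q = ∅) ↔ response DB q ⊆ rsp := by
          constructor
          · intro h id hid
            by_contra hmem
            exact (Finset.eq_empty_iff_forall_notMem.1 h id)
              (Finset.mem_inter.2 ⟨Finset.mem_compl.2 hmem, hid⟩)
          · intro h
            refine Finset.eq_empty_iff_forall_notMem.2 fun id hid => ?_
            exact (Finset.mem_compl.1 (Finset.mem_inter.1 hid).1)
              (h (Finset.mem_inter.1 hid).2)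
        by_cases h3 : response DB q ⊆ rsp
        · rw [if_pos (hPe.mpr h3), one_mul,
            if_pos ⟨hq, Finset.Subset.antisymm h3 h1⟩]
        · have hne : ¬ rspᶜ ∩ response DB q = ∅ := fun h => h3 (hPe.mp h)
          have hne2 : ¬ (q.1 ≤ q.2 ∧ response DB q = rsp) := by
            rintro ⟨-, h4⟩
            exact h3 (by simp [h4])
          rw [if_neg hne, zero_mul, if_neg hne2]
      have hc := e1.trans (e2.trans (e3.trans e4))
      refine Eq.trans ?_ hc.symm
      convert rfl using 2
    · simp only [h1, false_and, if_false, mul_zero, Finset.sum_const_zero]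
      rw [if_neg]
      rintro ⟨-, h4⟩
      exact h1 (by simp [h4])

end

/-- Theorem 2: if `DB'` is `T∩`-passing, i.e. for every subset `S` of at most `2k` records the
probability of simultaneously covering the values of `S` agrees in `DB` and `DB'`, then the
two response distributions coincide. -/
theorem stmt11 (N k : ℕ) (I : Type*) [Fintype I] [DecidableEq I]
    (DB DB' : I → Pt N k) (hDB : Function.Injective DB) (hDB' : Function.Injective DB')
    (QD : Pt N k × Pt N k → ℝ)
    (hnn : ∀ q : Pt N k × Pt N k, 0 ≤ QD q)
    (hzero : ∀ q : Pt N k × Pt N k, ¬ q.1 ≤ q.2 → QD q = 0)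
    (hsum : ∑ q : Pt N k × Pt N k, QD q = 1)
    (hpass : ∀ S : Finset I, S.card ≤ 2 * k → covAllPr QD DB S = covAllPr QD DB' S) :
    ∀ rsp : Finset I, respPr QD DB rsp = respPr QD DB' rsp := by
  intro rsp
  rw [respPr_ie QD DB rsp, respPr_ie QD DB' rsp]
  exact Finset.sum_congr rfl fun T _ => by
    rw [covAll_all DB DB' QD hnn hpass (rsp ∪ T)]
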